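/- Let G be a finite simple graph, k ≥ 2 an integer, and u a vertex of G. Let V₂ = N(u) and V₃ = V(G) ∖ N[u], and let G_u be the simple graph on vertex set V₂ ∪ V₃ whose edges are all edges of G between vertices of V₂ ∪ V₃ together with all pairs of distinct vertices of V₂. Suppose that the induced subgraph G[V₃] has no dominating set of cardinality k − 1. Then G_u has a dominating set of cardinality k − 1 if and only if G has a dominating set of cardinality k that contains u. -/
import Mathlib


/-- The graph `G_u` on vertex set `V₂ ∪ V₃ = V ∖ {u}` (where `V₂ = N(u)`,
`V₃ = V ∖ N[u]`), whose edges are all edges of `G` between vertices of `V₂ ∪ V₃`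
together with all pairs of distinct vertices of `V₂`. -/
def Gu {V : Type*} (G : SimpleGraph V) (u : V) : SimpleGraph V :=
  SimpleGraph.fromRel (fun a b => a ≠ u ∧ b ≠ u ∧ (G.Adj a b ∨ (G.Adj u a ∧ G.Adj u b)))

lemma gu_adj {V : Type*} (G : SimpleGraph V) (u a b : V) :
    (Gu G u).Adj a b ↔ a ≠ b ∧ a ≠ u ∧ b ≠ u ∧ (G.Adj a b ∨ (G.Adj u a ∧ G.Adj u b)) := by
  simp only [Gu, SimpleGraph.fromRel_adj]
  constructor
  · rintro ⟨hab, h | h⟩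
    · exact ⟨hab, h.1, h.2.1, h.2.2⟩
    · refine ⟨hab, h.2.1, h.1, ?_⟩
      rcases h.2.2 with h' | h'
      · exact Or.inl h'.symm
      · exact Or.inr ⟨h'.2, h'.1⟩
  · rintro ⟨hab, h1, h2, h3⟩
    exact ⟨hab, Or.inl ⟨h1, h2, h3⟩⟩

/-- Assuming `G[V₃]` has no dominating set of cardinality `k − 1`, the graph `G_u` has a
dominating set of cardinality `k − 1` iff `G` has a dominating set of cardinality `k`
containing `u`. -/
theorem stmt2 {V : Type*} [Fintype V] (G : SimpleGraph V) (k : ℕ) (hk : 2 ≤ k) (u : V)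
    (hV3 : ¬ ∃ S : Finset V, (∀ s ∈ S, s ≠ u ∧ ¬ G.Adj u s) ∧ S.card = k - 1 ∧
      ∀ v : V, v ≠ u → ¬ G.Adj u v → ∃ s ∈ S, v = s ∨ G.Adj s v) :
    (∃ S : Finset V, (∀ s ∈ S, s ≠ u) ∧ S.card = k - 1 ∧
        ∀ v : V, v ≠ u → ∃ s ∈ S, v = s ∨ (Gu G u).Adj s v) ↔
      (∃ S : Finset V, S.card = k ∧ u ∈ S ∧ ∀ v : V, ∃ s ∈ S, v = s ∨ G.Adj s v) := by
  classical
  constructor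
  · rintro ⟨S, hne, hcard, hdom⟩
    refine ⟨insert u S, ?_, Finset.mem_insert_self u S, ?_⟩
    · rw [Finset.card_insert_of_notMem (fun h => (hne u h) rfl), hcard]
      omega
    · intro v
      by_cases hv : v = u
      · exact ⟨u, Finset.mem_insert_self u S, Or.inl hv⟩
      · obtain ⟨s, hs, h⟩ := hdom v hv
        rcases h with h | h
        · exact ⟨s, Finset.mem_insert_of_mem hs, Or.inl h⟩
        · rw [gu_adj] at h
          rcases h.2.2.2 with h' | h'
          · exact ⟨s, Finset.mem_insert_of_mem hs, Or.inr h'⟩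
          · exact ⟨u, Finset.mem_insert_self u S, Or.inr h'.2⟩
  · rintro ⟨S, hcard, huS, hdom⟩
    set S' := S.erase u with hS'
    have hcard' : S'.card = k - 1 := by
      rw [hS', Finset.card_erase_of_mem huS, hcard]
    have hne : ∀ s ∈ S', s ≠ u := fun s hs => Finset.ne_of_mem_erase hs
    by_cases hw : ∃ w ∈ S', G.Adj u w
    · obtain ⟨w, hwS, hwadj⟩ := hw
      refine ⟨S', hne, hcard', fun v hv => ?_⟩
      obtain ⟨s, hs, h⟩ := hdom v
      rcases h with h | h
      · have hsu : s ≠ u := fun e => hv (h.trans e)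
        exact ⟨s, Finset.mem_erase.mpr ⟨hsu, hs⟩, Or.inl h⟩
      · by_cases hsu : s = u
        · rw [hsu] at h
          by_cases hwv : w = v
          · exact ⟨w, hwS, Or.inl hwv.symm⟩
          · exact ⟨w, hwS, Or.inr ((gu_adj G u w v).mpr
              ⟨hwv, hne w hwS, hv, Or.inr ⟨hwadj, h⟩⟩)⟩
        · by_cases hsv : s = v
          · exact ⟨s, Finset.mem_erase.mpr ⟨hsu, hs⟩, Or.inl hsv.symm⟩
          · exact ⟨s, Finset.mem_erase.mpr ⟨hsu, hs⟩, Or.inr ((gu_adj G u s v).mpr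
              ⟨hsv, hsu, hv, Or.inl h⟩)⟩
    · push_neg at hw
      exfalso
      apply hV3
      refine ⟨S', fun s hs => ⟨hne s hs, hw s hs⟩, hcard', fun v hvu hvadj => ?_⟩
      obtain ⟨s, hs, h⟩ := hdom v
      by_cases hsu : s = u
      · subst hsu
        rcases h with rfl | h
        · exact absurd rfl hvu
        · exact absurd h hvadj
      · exact ⟨s, Finset.mem_erase.mpr ⟨hsu, hs⟩, h⟩
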